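/- An observable A on a state space S is simulation irreducible if and only if A is postprocessing clean and A is postprocessing equivalent to an extreme observable. -/

import Mathlib

open scoped BigOperators

/-- A real-valued function on the state space `S` is affine if it respects convex
combinations of states. -/
def AffineOn {V : Type*} [NormedAddCommGroup V] [NormedSpace ℝ V] (S : Set V)
    (e : S → ℝ) : Prop :=
  ∀ (s₁ s₂ : S) (p : ℝ), 0 ≤ p → p ≤ 1 →
    ∀ h : p • (s₁ : V) + (1 - p) • (s₂ : V) ∈ S,
      e ⟨p • (s₁ : V) + (1 - p) • (s₂ : V), h⟩ = p * e s₁ + (1 - p) * e s₂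

/-- An effect on `S`: an affine function with values in `[0,1]`. -/
def IsEffectFn {V : Type*} [NormedAddCommGroup V] [NormedSpace ℝ V] (S : Set V)
    (e : S → ℝ) : Prop :=
  AffineOn S e ∧ ∀ s, 0 ≤ e s ∧ e s ≤ 1

/-- An observable on the state space `S` with finite outcome set `Fin n`:
a family of effects summing to the unit effect. -/
structure Obs {V : Type*} [NormedAddCommGroup V] [NormedSpace ℝ V] (S : Set V) where
  n : ℕ
  eff : Fin n → S → ℝ
  affine : ∀ x, AffineOn S (eff x)
  nonneg : ∀ x s, 0 ≤ eff x s
  normalized : ∀ s, ∑ x, eff x s = 1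

variable {V : Type*} [NormedAddCommGroup V] [NormedSpace ℝ V] {S : Set V}

/-- `B` is a postprocessing of `A` (written `A → B`): `B` is obtained from `A` by a
stochastic matrix. -/
def Postprocess (A B : Obs S) : Prop :=
  ∃ ν : Fin A.n → Fin B.n → ℝ,
    (∀ x y, 0 ≤ ν x y) ∧ (∀ x, ∑ y, ν x y = 1) ∧
    ∀ y s, B.eff y s = ∑ x, ν x y * A.eff x s

/-- Postprocessing equivalence `A ↔ B`. -/
def PPEquiv (A B : Obs S) : Prop := Postprocess A B ∧ Postprocess B A

/-- `A` is postprocessing clean: whenever `B → A` also `A → B`. -/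
def PPClean (A : Obs S) : Prop := ∀ B : Obs S, Postprocess B A → Postprocess A B

/-- A nonzero effect is indecomposable if in any decomposition into two nonzero
effects, both summands are positive scalar multiples of it. -/
def IsIndecomposableEffect (S : Set V) (e : S → ℝ) : Prop :=
  e ≠ 0 ∧ ∀ e₁ e₂ : S → ℝ, IsEffectFn S e₁ → IsEffectFn S e₂ → e₁ ≠ 0 → e₂ ≠ 0 →
    e = e₁ + e₂ →
    (∃ c : ℝ, 0 < c ∧ e₁ = c • e) ∧ (∃ c : ℝ, 0 < c ∧ e₂ = c • e)

/-- An observable is indecomposable if all its nonzero effects are indecomposable. -/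
def IndecomposableObs (A : Obs S) : Prop :=
  ∀ x, A.eff x ≠ 0 → IsIndecomposableEffect S (A.eff x)

/-- An observable is extreme if any convex decomposition into observables with the
same outcome set is trivial. -/
def ExtremeObs (A : Obs S) : Prop :=
  ∀ B C : Fin A.n → S → ℝ,
    (∀ x, AffineOn S (B x)) → (∀ x s, 0 ≤ B x s) → (∀ s, ∑ x, B x s = 1) →
    (∀ x, AffineOn S (C x)) → (∀ x s, 0 ≤ C x s) → (∀ s, ∑ x, C x s = 1) →
    ∀ lam : ℝ, 0 < lam → lam < 1 →
      (∀ x, A.eff x = lam • B x + (1 - lam) • C x) →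
      B = A.eff ∧ C = A.eff

/-- `A` is simulable by the set of observables `𝓑`: `A` is obtained by mixing
finitely many members of `𝓑` (with a common outcome set) and postprocessing. -/
def Simulable (𝓑 : Set (Obs S)) (A : Obs S) : Prop :=
  ∃ (m k : ℕ) (B : Fin m → Obs S) (hk : ∀ i, (B i).n = k)
    (p : Fin m → ℝ) (ν : Fin m → Fin k → Fin A.n → ℝ),
    (∀ i, B i ∈ 𝓑) ∧
    (∀ i, 0 ≤ p i) ∧ (∑ i, p i = 1) ∧
    (∀ i x y, 0 ≤ ν i x y) ∧ (∀ i x, ∑ y, ν i x y = 1) ∧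
    ∀ y s, A.eff y s = ∑ i, ∑ x, p i * ν i x y * (B i).eff (Fin.cast (hk i).symm x) s

/-- The set of all `𝓑`-simulable observables. -/
def simSet (𝓑 : Set (Obs S)) : Set (Obs S) := {A | Simulable 𝓑 A}

/-- `A` is simulation irreducible: it can only be simulated by sets containing an
observable postprocessing equivalent to it. -/
def SimIrreducible (A : Obs S) : Prop :=
  ∀ 𝓑 : Set (Obs S), Simulable 𝓑 A → ∃ B ∈ 𝓑, PPEquiv A B

/-! ### Toolkit for `AffineOn` -/

section AffineToolkit

variable {V : Type*} [NormedAddCommGroup V] [NormedSpace ℝ V] {S : Set V}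

lemma affineOn_sum {ι : Type*} (u : Finset ι) (f : ι → S → ℝ)
    (hf : ∀ i ∈ u, AffineOn S (f i)) : AffineOn S (fun s => ∑ i ∈ u, f i s) := by
  intro s₁ s₂ p hp0 hp1 h
  simp only []
  rw [Finset.sum_congr rfl (fun i hi => hf i hi s₁ s₂ p hp0 hp1 h), Finset.sum_add_distrib,
    ← Finset.mul_sum, ← Finset.mul_sum]

lemma affineOn_const_mul (c : ℝ) {f : S → ℝ} (hf : AffineOn S f) :
    AffineOn S (fun s => c * f s) := by
  intro s₁ s₂ p hp0 hp1 h
  simp only []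
  rw [hf s₁ s₂ p hp0 hp1 h]; ring

lemma affineOn_of_affineMap (g : V →ᵃ[ℝ] ℝ) : AffineOn S (fun s => g s) := by
  intro s₁ s₂ p hp0 hp1 h
  have := Convex.combo_affine_apply (f := g) (x := (s₁ : V)) (y := (s₂ : V))
    (a := p) (b := 1 - p) (by ring)
  simp only [smul_eq_mul] at this ⊢
  exact this

/-- An `AffineOn` function respects arbitrary finite convex combinations. -/
lemma AffineOn.combo {f : S → ℝ} (hf : AffineOn S f) {ι : Type*}
    (u : Finset ι) (w : ι → ℝ) (z : ι → S) (hSconv : Convex ℝ S)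
    (hw : ∀ i ∈ u, 0 ≤ w i) (hw1 : ∑ i ∈ u, w i = 1)
    (h : ∑ i ∈ u, w i • (z i : V) ∈ S) :
    f ⟨∑ i ∈ u, w i • (z i : V), h⟩ = ∑ i ∈ u, w i * f (z i) := by
  classical
  induction u using Finset.induction_on generalizing w with
  | empty => simp at hw1
  | @insert a u ha ih =>
    have hwa : 0 ≤ w a := hw a (Finset.mem_insert_self a u)
    have hsum : w a + ∑ i ∈ u, w i = 1 := by rw [← Finset.sum_insert ha]; exact hw1
    set c : ℝ := ∑ i ∈ u, w i with hc
    have hc0 : 0 ≤ c := Finset.sum_nonneg fun i hi => hw i (Finset.mem_insert_of_mem hi)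
    rcases eq_or_lt_of_le hc0 with hc0' | hc0'
    · -- all weights in u vanish, w a = 1
      have hwa1 : w a = 1 := by linarith
      have hz : ∀ i ∈ u, w i = 0 := by
        intro i hi
        have := (Finset.sum_eq_zero_iff_of_nonneg
          (fun j hj => hw j (Finset.mem_insert_of_mem hj))).1 hc0'.symm
        exact this i hi
      have hpt : ∑ i ∈ insert a u, w i • (z i : V) = (z a : V) := by
        rw [Finset.sum_insert ha, hwa1, one_smul, Finset.sum_eq_zero, add_zero]
        intro i hi; rw [hz i hi, zero_smul]
      have : (⟨∑ i ∈ insert a u, w i • (z i : V), h⟩ : S) = z a := Subtype.ext hpt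
      rw [this, Finset.sum_insert ha, hwa1, one_mul, Finset.sum_eq_zero, add_zero]
      intro i hi; rw [hz i hi, zero_mul]
    · -- c > 0
      set w' : ι → ℝ := fun i => w i / c with hw'
      have hw'0 : ∀ i ∈ u, 0 ≤ w' i := fun i hi =>
        div_nonneg (hw i (Finset.mem_insert_of_mem hi)) hc0
      have hw'1 : ∑ i ∈ u, w' i = 1 := by
        rw [← Finset.sum_div]; exact div_self (ne_of_gt hc0')
      have hm : ∑ i ∈ u, w' i • (z i : V) ∈ S :=
        hSconv.sum_mem hw'0 hw'1 (fun i _ => (z i).2)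
      have hwa1 : w a ≤ 1 := by linarith
      have hkey : w a • (z a : V) + (1 - w a) • (∑ i ∈ u, w' i • (z i : V))
          = ∑ i ∈ insert a u, w i • (z i : V) := by
        rw [Finset.sum_insert ha, Finset.smul_sum]
        congr 1
        refine Finset.sum_congr rfl fun i hi => ?_
        rw [smul_smul]
        congr 1
        have : (1 : ℝ) - w a = c := by linarith
        rw [this, hw']
        field_simp
      have h' : w a • (z a : V) + (1 - w a) • ((⟨_, hm⟩ : S) : V) ∈ S := by
        rw [hkey]; exact h
      have heq : (⟨∑ i ∈ insert a u, w i • (z i : V), h⟩ : S)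
          = ⟨w a • (z a : V) + (1 - w a) • ((⟨_, hm⟩ : S) : V), h'⟩ := Subtype.ext hkey.symm
      rw [heq, hf (z a) ⟨_, hm⟩ (w a) hwa hwa1 h',
        ih w' hw'0 hw'1 hm, Finset.sum_insert ha, Finset.mul_sum]
      congr 1
      refine Finset.sum_congr rfl fun i hi => ?_
      rw [hw']
      have : (1 : ℝ) - w a = c := by linarith
      rw [this]
      field_simp

end AffineToolkit

/-! ### Toolkit for postprocessing -/

section PPToolkit

variable {V : Type*} [NormedAddCommGroup V] [NormedSpace ℝ V] {S : Set V}

lemma Postprocess.refl (A : Obs S) : Postprocess A A := by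
  classical
  refine ⟨fun x y => if x = y then 1 else 0, fun x y => by positivity, fun x => by simp, ?_⟩
  intro y s
  rw [Finset.sum_eq_single y (fun b _ hb => by simp [hb]) (by simp)]
  simp

lemma Postprocess.trans {A B C : Obs S} (h1 : Postprocess A B) (h2 : Postprocess B C) :
    Postprocess A C := by
  obtain ⟨ν₁, hν₁0, hν₁1, hν₁⟩ := h1
  obtain ⟨ν₂, hν₂0, hν₂1, hν₂⟩ := h2
  refine ⟨fun x z => ∑ y, ν₁ x y * ν₂ y z, fun x z =>
    Finset.sum_nonneg fun y _ => mul_nonneg (hν₁0 x y) (hν₂0 y z), fun x => ?_, fun z s => ?_⟩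
  · rw [Finset.sum_comm]
    simp only [← Finset.mul_sum, hν₂1, mul_one]
    exact hν₁1 x
  · rw [hν₂ z s]
    rw [Finset.sum_congr rfl fun y (_ : y ∈ Finset.univ) => by rw [hν₁ y s, Finset.mul_sum]]
    rw [Finset.sum_comm]
    refine Finset.sum_congr rfl fun x _ => ?_
    rw [Finset.sum_mul]
    exact Finset.sum_congr rfl fun y _ => by ring

end PPToolkit

/-! ### Simulation irreducible implies clean -/

section MainEasy

variable {V : Type*} [NormedAddCommGroup V] [NormedSpace ℝ V] {S : Set V}

lemma SimIrreducible.ppClean {A : Obs S} (h : SimIrreducible A) : PPClean A := by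
  intro B hBA
  obtain ⟨ν, hν0, hν1, hνe⟩ := hBA
  have hsim : Simulable {B} A := by
    refine ⟨1, B.n, fun _ => B, fun _ => rfl, fun _ => 1, fun _ x y => ν x y,
      fun _ => rfl, fun _ => zero_le_one, by simp, fun _ x y => hν0 x y,
      fun _ x => hν1 x, ?_⟩
    intro y s
    rw [hνe y s]
    simp
  obtain ⟨B', hB', hequiv⟩ := h {B} hsim
  rw [Set.mem_singleton_iff] at hB'
  subst hB'
  exact hequiv.1

/-! ### Clean and equivalent-to-extreme implies simulation irreducible -/

lemma simIrreducible_of_clean_of_extreme {A : Obs S} (hclean : PPClean A)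
    (E : Obs S) (hE : ExtremeObs E) (hAE : PPEquiv A E) : SimIrreducible A := by
  classical
  intro 𝓑 hsim
  obtain ⟨m, k, B, hk, p, ν, hB, hp0, hp1, hν0, hν1, hsimeq⟩ := hsim
  set e : Fin m × Fin k ≃ Fin (m * k) := finProdFinEquiv with he
  -- the mixed observable
  set Ceff : Fin (m * k) → S → ℝ := fun z s =>
    p (e.symm z).1 * (B (e.symm z).1).eff (Fin.cast (hk (e.symm z).1).symm (e.symm z).2) s
    with hCeff_def
  have hCeff : ∀ (i : Fin m) (x : Fin k) (s : S),
      Ceff (e (i, x)) s = p i * (B i).eff (Fin.cast (hk i).symm x) s := by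
    intro i x s
    simp only [hCeff_def]
    rw [Equiv.symm_apply_apply]
  have hBsum : ∀ (i : Fin m) (s : S),
      ∑ x : Fin k, (B i).eff (Fin.cast (hk i).symm x) s = 1 := by
    intro i s
    rw [← (B i).normalized s]
    exact Fintype.sum_equiv (finCongr (hk i).symm) _ _ (fun x => rfl)
  have hCaff : ∀ z, AffineOn S (Ceff z) :=
    fun z => affineOn_const_mul _ ((B _).affine _)
  have hC0 : ∀ z s, 0 ≤ Ceff z s :=
    fun z s => mul_nonneg (hp0 _) ((B _).nonneg _ _)
  have hCnorm : ∀ s, ∑ z, Ceff z s = 1 := by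
    intro s
    rw [← Equiv.sum_comp e (fun z => Ceff z s), Fintype.sum_prod_type]
    rw [Finset.sum_congr rfl fun i (_ : i ∈ Finset.univ) =>
      Finset.sum_congr rfl fun x (_ : x ∈ Finset.univ) => hCeff i x s]
    rw [Finset.sum_congr rfl fun i (_ : i ∈ Finset.univ) => by
      rw [← Finset.mul_sum, hBsum i s, mul_one]]
    exact hp1
  set C : Obs S := ⟨m * k, Ceff, hCaff, hC0, hCnorm⟩ with hC
  have hCA : Postprocess C A := by
    refine ⟨fun z y => ν (e.symm z).1 (e.symm z).2 y, fun z y => hν0 _ _ _,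
      fun z => hν1 _ _, ?_⟩
    intro y s
    rw [hsimeq y s]
    rw [← Equiv.sum_comp e (fun z => ν (e.symm z).1 (e.symm z).2 y * C.eff z s),
      Fintype.sum_prod_type]
    refine Finset.sum_congr rfl fun i _ => Finset.sum_congr rfl fun x _ => ?_
    show p i * ν i x y * (B i).eff (Fin.cast (hk i).symm x) s
        = ν (e.symm (e (i, x))).1 (e.symm (e (i, x))).2 y * Ceff (e (i, x)) s
    rw [hCeff i x s, Equiv.symm_apply_apply]
    ring
  have hAC : Postprocess A C := hclean C hCA
  have hCE : Postprocess C E := hCA.trans hAE.1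
  obtain ⟨μ, hμ0, hμ1, hμe⟩ := hCE
  -- the component observables
  set D : Fin m → Fin E.n → S → ℝ := fun i y s =>
    ∑ x : Fin k, μ (e (i, x)) y * (B i).eff (Fin.cast (hk i).symm x) s with hD
  have hDaff : ∀ i y, AffineOn S (D i y) :=
    fun i y => affineOn_sum _ _ fun x _ => affineOn_const_mul _ ((B i).affine _)
  have hD0 : ∀ i y s, 0 ≤ D i y s :=
    fun i y s => Finset.sum_nonneg fun x _ => mul_nonneg (hμ0 _ _) ((B i).nonneg _ _)
  have hDnorm : ∀ i s, ∑ y, D i y s = 1 := by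
    intro i s
    rw [Finset.sum_comm]
    rw [Finset.sum_congr rfl fun x _ => by
      rw [← Finset.sum_mul, hμ1 (e (i, x))]]
    simpa using hBsum i s
  have hED : ∀ y s, E.eff y s = ∑ i, p i * D i y s := by
    intro y s
    rw [hμe y s]
    show (∑ z, μ z y * Ceff z s) = _
    rw [← Equiv.sum_comp e (fun z => μ z y * Ceff z s), Fintype.sum_prod_type]
    refine Finset.sum_congr rfl fun i _ => ?_
    rw [Finset.sum_congr rfl fun x (_ : x ∈ Finset.univ) => by rw [hCeff i x s]]
    rw [hD, Finset.mul_sum]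
    exact Finset.sum_congr rfl fun x _ => by ring
  -- each component with positive weight equals E
  have hDE : ∀ i, 0 < p i → D i = E.eff := by
    intro i hpi
    have hpile : p i ≤ 1 := by
      rw [← hp1]
      exact Finset.single_le_sum (fun j _ => hp0 j) (Finset.mem_univ i)
    rcases eq_or_lt_of_le hpile with h1 | h1
    · -- p i = 1, all other weights vanish
      have hz : ∀ j, j ≠ i → p j = 0 := by
        intro j hj
        have hsum : ∑ l ∈ Finset.univ.erase i, p l = 0 := by
          have := Finset.add_sum_erase Finset.univ p (Finset.mem_univ i)
          rw [hp1, ← h1] at this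
          linarith
        have := (Finset.sum_eq_zero_iff_of_nonneg (fun l _ => hp0 l)).1 hsum j
          (Finset.mem_erase.2 ⟨hj, Finset.mem_univ j⟩)
        exact this
      funext y s
      rw [hED y s, Finset.sum_eq_single i (fun j _ hj => by rw [hz j hj, zero_mul])
        (fun hi => absurd (Finset.mem_univ i) hi), h1, one_mul]
    · -- 0 < p i < 1 : use extremality
      set lam := p i with hlam
      set Rst : Fin E.n → S → ℝ := fun y s =>
        (1 - lam)⁻¹ * ∑ j ∈ Finset.univ.erase i, p j * D j y s with hRst
      have h1l : (0:ℝ) < 1 - lam := by linarith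
      have hRaff : ∀ y, AffineOn S (Rst y) :=
        fun y => affineOn_const_mul _ (affineOn_sum _ _ fun j _ =>
          affineOn_const_mul _ (hDaff j y))
      have hR0 : ∀ y s, 0 ≤ Rst y s := fun y s =>
        mul_nonneg (le_of_lt (inv_pos.2 h1l))
          (Finset.sum_nonneg fun j _ => mul_nonneg (hp0 j) (hD0 j y s))
      have herase : ∑ j ∈ Finset.univ.erase i, p j = 1 - lam := by
        have := Finset.add_sum_erase Finset.univ p (Finset.mem_univ i)
        rw [hp1] at this
        linarith
      have hRnorm : ∀ s, ∑ y, Rst y s = 1 := by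
        intro s
        rw [← Finset.mul_sum, Finset.sum_comm]
        rw [Finset.sum_congr rfl fun j _ => by rw [← Finset.mul_sum, hDnorm j s, mul_one]]
        rw [herase]
        exact inv_mul_cancel₀ (ne_of_gt h1l)
      have hdecomp : ∀ y, E.eff y = lam • D i y + (1 - lam) • Rst y := by
        intro y
        funext s
        show E.eff y s = lam * D i y s + (1 - lam) * Rst y s
        rw [hED y s, hRst]
        simp only []
        rw [← mul_assoc, mul_inv_cancel₀ (ne_of_gt h1l), one_mul]
        rw [← Finset.add_sum_erase Finset.univ (fun j => p j * D j y s) (Finset.mem_univ i)]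
      obtain ⟨hgoal, -⟩ := hE (D i) Rst (hDaff i) (hD0 i) (hDnorm i) hRaff hR0 hRnorm lam hpi h1 hdecomp
      exact hgoal
  -- pick a component with positive weight
  have hex : ∃ i, 0 < p i := by
    by_contra hcon
    push_neg at hcon
    have : ∑ i, p i ≤ 0 := Finset.sum_nonpos fun i _ => hcon i
    rw [hp1] at this
    linarith
  obtain ⟨i₀, hi₀⟩ := hex
  have hDi₀ : D i₀ = E.eff := hDE i₀ hi₀
  have hBiE : Postprocess (B i₀) E := by
    refine ⟨fun x' y => μ (e (i₀, Fin.cast (hk i₀) x')) y,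
      fun x' y => hμ0 _ _, fun x' => hμ1 _, ?_⟩
    intro y s
    rw [← hDi₀]
    show D i₀ y s = _
    rw [hD]
    simp only []
    exact Fintype.sum_equiv (finCongr (hk i₀).symm) _ _ (fun x => rfl)
  have hBA : Postprocess (B i₀) A := hBiE.trans hAE.2
  exact ⟨B i₀, hB i₀, hclean _ hBA, hBA⟩

end MainEasy

/-! ### Minkowski's theorem: a compact convex set in a finite-dimensional space is the
convex hull of its extreme points. -/

section Minkowski

open scoped RealInnerProductSpace
open Filter Topology

variable {F : Type*} [NormedAddCommGroup F] [InnerProductSpace ℝ F] [FiniteDimensional ℝ F]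

private lemma span_sub_basepoint {K : Set F} {x r : F} (hx : x ∈ K) (hr : r ∈ K) :
    Submodule.span ℝ ((· - x) '' K) = Submodule.span ℝ ((· - r) '' K) := by
  have key : ∀ u w : F, u ∈ K → w ∈ K →
      Submodule.span ℝ ((· - u) '' K) ≤ Submodule.span ℝ ((· - w) '' K) := by
    intro u w hu hw
    rw [Submodule.span_le]
    rintro - ⟨z, hz, rfl⟩
    have h1 : z - w ∈ Submodule.span ℝ ((· - w) '' K) :=
      Submodule.subset_span ⟨z, hz, rfl⟩
    have h2 : u - w ∈ Submodule.span ℝ ((· - w) '' K) :=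
      Submodule.subset_span ⟨u, hu, rfl⟩
    show z - u ∈ Submodule.span ℝ ((· - w) '' K)
    have heq : z - u = (z - w) - (u - w) := by abel
    rw [heq]
    exact sub_mem h1 h2
  exact le_antisymm (key x r hx hr) (key r x hr hx)

private lemma exists_supporting {K : Set F} (hK : IsCompact K) (hKc : Convex ℝ K)
    {r : F} (hr : r ∈ K) {v : F}
    (hv : v ∈ Submodule.span ℝ ((· - r) '' K)) (hv0 : v ≠ 0)
    (hbd : ∀ ε : ℝ, 0 < ε → r - ε • v ∉ K) :
    ∃ g : F, g ∈ Submodule.span ℝ ((· - r) '' K) ∧ ‖g‖ = 1 ∧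
      ∀ k ∈ K, ⟪g, k - r⟫ ≤ 0 := by
  set W := Submodule.span ℝ ((· - r) '' K) with hW
  have hmemW : ∀ k ∈ K, k - r ∈ W := fun k hk => Submodule.subset_span ⟨k, hk, rfl⟩
  have hsep : ∀ n : ℕ, ∃ w : F, w ∈ W ∧ ‖w‖ = 1 ∧
      ∀ k ∈ K, ⟪w, k - r⟫ < ((n : ℝ) + 1)⁻¹ * ‖v‖ := by
    intro n
    have hε : (0:ℝ) < ((n : ℝ) + 1)⁻¹ := by positivity
    have hz : r - ((n : ℝ) + 1)⁻¹ • v ∉ K := hbd _ hε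
    obtain ⟨f, u, hfu, hux⟩ := geometric_hahn_banach_closed_point hKc hK.isClosed hz
    set a := (InnerProductSpace.toDual ℝ F).symm f with ha
    have haf : ∀ z : F, ⟪a, z⟫ = f z := fun z => InnerProductSpace.toDual_symm_apply
    set w := (W.orthogonalProjection a : F) with hw
    have hwW : w ∈ W := (W.orthogonalProjection a).2
    have hinner : ∀ z ∈ W, ⟪a, z⟫ = ⟪w, z⟫ := by
      intro z hz'
      have horth : a - w ∈ Wᗮ := W.sub_starProjection_mem_orthogonal a
      have := horth z hz'
      have hsub : ⟪a - w, z⟫ = 0 := by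
        rwa [real_inner_comm]
      rw [inner_sub_left] at hsub
      linarith
    have hkey : ∀ k ∈ K, ⟪w, k - r⟫ < ((n : ℝ) + 1)⁻¹ * ⟪w, -v⟫ := by
      intro k hk
      have h1 : f k < f (r - ((n : ℝ) + 1)⁻¹ • v) := lt_trans (hfu k hk) hux
      rw [← haf, ← haf] at h1
      have h2 : ⟪a, r - ((n : ℝ) + 1)⁻¹ • v⟫ = ⟪a, r⟫ + ((n : ℝ) + 1)⁻¹ * ⟪a, -v⟫ := by
        rw [sub_eq_add_neg, inner_add_right, ← smul_neg, real_inner_smul_right]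
      have h3 : ⟪a, k - r⟫ < ((n : ℝ) + 1)⁻¹ * ⟪a, -v⟫ := by
        rw [inner_sub_right]; rw [h2] at h1; linarith
      rwa [hinner _ (hmemW k hk), hinner (-v) (neg_mem hv)] at h3
    have hw0 : w ≠ 0 := by
      intro hw0
      have := hkey r hr
      rw [hw0] at this
      simp at this
    have hwpos : 0 < ‖w‖ := norm_pos_iff.2 hw0
    refine ⟨‖w‖⁻¹ • w, Submodule.smul_mem _ _ hwW, by
      rw [norm_smul, norm_inv, norm_norm, inv_mul_cancel₀ (ne_of_gt hwpos)], ?_⟩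
    intro k hk
    have h4 : ⟪w, -v⟫ ≤ ‖w‖ * ‖v‖ := by
      calc ⟪w, -v⟫ ≤ ‖w‖ * ‖-v‖ := real_inner_le_norm w (-v)
      _ = ‖w‖ * ‖v‖ := by rw [norm_neg]
    have h5 : ⟪w, k - r⟫ < ((n : ℝ) + 1)⁻¹ * (‖w‖ * ‖v‖) := by
      calc ⟪w, k - r⟫ < ((n : ℝ) + 1)⁻¹ * ⟪w, -v⟫ := hkey k hk
      _ ≤ ((n : ℝ) + 1)⁻¹ * (‖w‖ * ‖v‖) := by
          apply mul_le_mul_of_nonneg_left h4 (le_of_lt (by positivity))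
    rw [real_inner_smul_left]
    calc ‖w‖⁻¹ * ⟪w, k - r⟫ < ‖w‖⁻¹ * (((n : ℝ) + 1)⁻¹ * (‖w‖ * ‖v‖)) := by
          exact mul_lt_mul_of_pos_left h5 (by positivity)
    _ = ((n : ℝ) + 1)⁻¹ * ‖v‖ := by field_simp
  choose gs hgsW hgsnorm hgs using hsep
  have hSphComp : IsCompact ((W : Set F) ∩ Metric.sphere 0 1) := by
    apply Metric.isCompact_of_isClosed_isBounded
    · exact (Submodule.closed_of_finiteDimensional W).inter Metric.isClosed_sphere
    · exact (Metric.isBounded_sphere).subset Set.inter_subset_right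
  have hmem : ∀ n, gs n ∈ (W : Set F) ∩ Metric.sphere 0 1 := fun n =>
    ⟨hgsW n, mem_sphere_zero_iff_norm.2 (hgsnorm n)⟩
  obtain ⟨g, hgmem, φ, hφ, hgtend⟩ := hSphComp.tendsto_subseq hmem
  refine ⟨g, hgmem.1, mem_sphere_zero_iff_norm.1 hgmem.2, ?_⟩
  intro k hk
  have h1 : Tendsto (fun j => ⟪gs (φ j), k - r⟫) atTop (𝓝 ⟪g, k - r⟫) :=
    Filter.Tendsto.inner hgtend tendsto_const_nhds
  have h2 : Tendsto (fun j => ((φ j : ℝ) + 1)⁻¹ * ‖v‖) atTop (𝓝 0) := by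
    have hb : Tendsto (fun j : ℕ => ((j : ℝ) + 1)⁻¹) atTop (𝓝 0) := by
      simpa [one_div] using tendsto_one_div_add_atTop_nhds_zero_nat (𝕜 := ℝ)
    have := (hb.comp hφ.tendsto_atTop).mul_const ‖v‖
    simpa using this
  exact le_of_tendsto_of_tendsto' h1 h2 (fun j => le_of_lt (hgs (φ j) k hk))

private lemma minkowski_aux (n : ℕ) : ∀ (K : Set F), IsCompact K → Convex ℝ K →
    ∀ x ∈ K, Module.finrank ℝ (Submodule.span ℝ ((· - x) '' K)) ≤ n →
    x ∈ convexHull ℝ (K.extremePoints ℝ) := by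
  induction n with
  | zero =>
    intro K hK hKc x hx hrank
    have hbot : Submodule.span ℝ ((· - x) '' K) = ⊥ :=
      Submodule.finrank_eq_zero.1 (Nat.le_zero.1 hrank)
    have hsing : ∀ y ∈ K, y = x := by
      intro y hy
      have : y - x ∈ Submodule.span ℝ ((· - x) '' K) := Submodule.subset_span ⟨y, hy, rfl⟩
      rw [hbot, Submodule.mem_bot, sub_eq_zero] at this
      exact this
    apply subset_convexHull
    exact mem_extremePoints.2 ⟨hx, fun x₁ h₁ x₂ h₂ _ => ⟨hsing x₁ h₁, hsing x₂ h₂⟩⟩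
  | succ n ih =>
    intro K hK hKc x hx hrank
    by_cases hsing : ∀ y ∈ K, y = x
    · apply subset_convexHull
      exact mem_extremePoints.2 ⟨hx, fun x₁ h₁ x₂ h₂ _ => ⟨hsing x₁ h₁, hsing x₂ h₂⟩⟩
    push_neg at hsing
    obtain ⟨y, hy, hyx⟩ := hsing
    set v := y - x with hv
    have hv0 : v ≠ 0 := sub_ne_zero.2 hyx
    have hvW : v ∈ Submodule.span ℝ ((· - x) '' K) := Submodule.subset_span ⟨y, hy, rfl⟩
    -- key step: boundary points in a given direction lie in hull of extreme points
    have key : ∀ r ∈ K, ∀ w : F, w ∈ Submodule.span ℝ ((· - x) '' K) → w ≠ 0 →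
        (∀ ε : ℝ, 0 < ε → r - ε • w ∉ K) → r ∈ convexHull ℝ (K.extremePoints ℝ) := by
      intro r hrK w hwW hw0 hbd
      rw [span_sub_basepoint hx hrK] at hwW
      obtain ⟨g, hgW, hgnorm, hgle⟩ := exists_supporting hK hKc hrK hwW hw0 hbd
      set Fc : Set F := {k ∈ K | ⟪g, k - r⟫ = 0} with hFc
      have hrFc : r ∈ Fc := ⟨hrK, by simp⟩
      have hFcclosed : IsClosed {z : F | ⟪g, z - r⟫ = 0} := by
        have hcont : Continuous fun z : F => ⟪g, z - r⟫ :=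
          Continuous.inner continuous_const (continuous_id.sub continuous_const)
        exact isClosed_eq hcont continuous_const
      have hFccomp : IsCompact Fc := hK.inter_right hFcclosed
      have hFcconv : Convex ℝ Fc := by
        intro k₁ hk₁ k₂ hk₂ a b ha hb hab
        refine ⟨hKc hk₁.1 hk₂.1 ha hb hab, ?_⟩
        have hr' : a • r + b • r = r := by rw [← add_smul, hab, one_smul]
        have hsplit : a • k₁ + b • k₂ - r = a • (k₁ - r) + b • (k₂ - r) := by
          have h0 : a • k₁ + b • k₂ - r = a • k₁ + b • k₂ - (a • r + b • r) := by rw [hr']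
          rw [h0, smul_sub, smul_sub]
          abel
        rw [hsplit, inner_add_right, real_inner_smul_right, real_inner_smul_right,
          hk₁.2, hk₂.2]
        ring
      have hExt : IsExtreme ℝ K Fc := by
        constructor
        · exact fun z hz => hz.1
        · rintro x₁ hx₁ x₂ hx₂ z hzF ⟨a, b, ha, hb, hab, hz⟩
          have h₁ : ⟪g, x₁ - r⟫ ≤ 0 := hgle x₁ hx₁
          have h₂ : ⟪g, x₂ - r⟫ ≤ 0 := hgle x₂ hx₂
          have hzero : a * ⟪g, x₁ - r⟫ + b * ⟪g, x₂ - r⟫ = 0 := by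
            have hr' : a • r + b • r = r := by rw [← add_smul, hab, one_smul]
            have hsplit : z - r = a • (x₁ - r) + b • (x₂ - r) := by
              have h0 : z - r = a • x₁ + b • x₂ - (a • r + b • r) := by rw [hr', hz]
              rw [h0, smul_sub, smul_sub]
              abel
            have := hzF.2
            rw [hsplit, inner_add_right, real_inner_smul_right, real_inner_smul_right] at this
            exact this
          have e₁ : ⟪g, x₁ - r⟫ = 0 := by nlinarith
          have e₂ : ⟪g, x₂ - r⟫ = 0 := by nlinarith
          exact ⟨hx₁, e₁⟩
      -- the face has strictly smaller span
      have hWFle : Submodule.span ℝ ((· - r) '' Fc) ≤ Submodule.span ℝ ((· - r) '' K) :=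
        Submodule.span_mono (Set.image_mono fun z hz => hz.1)
      have hgnot : g ∉ Submodule.span ℝ ((· - r) '' Fc) := by
        intro hgmem
        have hle : Submodule.span ℝ ((· - r) '' Fc) ≤ (ℝ ∙ g)ᗮ := by
          rw [Submodule.span_le]
          rintro - ⟨z, hz, rfl⟩
          exact Submodule.mem_orthogonal_singleton_iff_inner_right.2 hz.2
        have hgg : ⟪g, g⟫ = 0 :=
          Submodule.mem_orthogonal_singleton_iff_inner_right.1 (hle hgmem)
        rw [real_inner_self_eq_norm_sq, hgnorm] at hgg
        norm_num at hgg
      have hne : Submodule.span ℝ ((· - r) '' Fc) ≠ Submodule.span ℝ ((· - r) '' K) :=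
        fun h => hgnot (h ▸ hgW)
      have hlt := Submodule.finrank_lt_finrank_of_lt (lt_of_le_of_ne hWFle hne)
      have hKr : Submodule.span ℝ ((· - r) '' K) = Submodule.span ℝ ((· - x) '' K) :=
        (span_sub_basepoint hx hrK).symm
      rw [hKr] at hlt
      have hrankF : Module.finrank ℝ (Submodule.span ℝ ((· - r) '' Fc)) ≤ n := by omega
      have hres := ih Fc hFccomp hFcconv r hrFc hrankF
      exact convexHull_mono hExt.extremePoints_subset_extremePoints hres
    -- the line through x in direction v
    set I : Set ℝ := {t : ℝ | x + t • v ∈ K} with hI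
    have hIclosed : IsClosed I := by
      have hcont : Continuous fun t : ℝ => x + t • v :=
        continuous_const.add (continuous_id.smul continuous_const)
      exact hK.isClosed.preimage hcont
    have hIbdd : Bornology.IsBounded I := by
      obtain ⟨C, hC⟩ := isBounded_iff_forall_norm_le.1 hK.isBounded
      refine isBounded_iff_forall_norm_le.2 ⟨(C + ‖x‖) / ‖v‖, ?_⟩
      intro t ht
      have h1 : ‖t • v‖ ≤ C + ‖x‖ := by
        calc ‖t • v‖ = ‖(x + t • v) - x‖ := by congr 1; abel
        _ ≤ ‖x + t • v‖ + ‖x‖ := norm_sub_le _ _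
        _ ≤ C + ‖x‖ := by linarith [hC _ ht]
      rw [norm_smul] at h1
      have hv' : 0 < ‖v‖ := norm_pos_iff.2 hv0
      rw [le_div_iff₀ hv']
      exact h1
    have hIcomp : IsCompact I := Metric.isCompact_of_isClosed_isBounded hIclosed hIbdd
    have hI0 : (0:ℝ) ∈ I := by
      show x + (0:ℝ) • v ∈ K
      simpa using hx
    have hI1 : (1:ℝ) ∈ I := by
      show x + (1:ℝ) • v ∈ K
      rw [one_smul, hv]
      simpa using hy
    set a := sInf I with ha
    set b := sSup I with hb
    have haI : a ∈ I := hIcomp.sInf_mem ⟨0, hI0⟩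
    have hbI : b ∈ I := hIcomp.sSup_mem ⟨0, hI0⟩
    have ha0 : a ≤ 0 := csInf_le hIbdd.bddBelow hI0
    have hb1 : 1 ≤ b := le_csSup hIbdd.bddAbove hI1
    set P := x + a • v with hP
    set Q := x + b • v with hQ
    have hPK : P ∈ K := haI
    have hQK : Q ∈ K := hbI
    have hPbd : ∀ ε : ℝ, 0 < ε → P - ε • v ∉ K := by
      intro ε hε hmem
      have hmem' : a - ε ∈ I := by
        show x + (a - ε) • v ∈ K
        have heq : x + (a - ε) • v = P - ε • v := by rw [hP, sub_smul]; abel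
        rw [heq]; exact hmem
      have := csInf_le hIbdd.bddBelow hmem'
      rw [← ha] at this
      linarith
    have hQbd : ∀ ε : ℝ, 0 < ε → Q - ε • (-v) ∉ K := by
      intro ε hε hmem
      have hmem' : b + ε ∈ I := by
        show x + (b + ε) • v ∈ K
        have heq : x + (b + ε) • v = Q - ε • (-v) := by
          rw [hQ, add_smul, smul_neg, sub_neg_eq_add]; abel
        rw [heq]; exact hmem
      have := le_csSup hIbdd.bddAbove hmem'
      rw [← hb] at this
      linarith
    have hPhull := key P hPK v hvW hv0 hPbd
    have hQhull := key Q hQK (-v) (neg_mem hvW) (neg_ne_zero.2 hv0) hQbd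
    have hba : (0:ℝ) < b - a := by linarith
    set θ := b / (b - a) with hθ
    have hθ0 : 0 ≤ θ := div_nonneg (by linarith) (le_of_lt hba)
    have hθ1 : 1 - θ = -a / (b - a) := by
      rw [hθ]
      field_simp
      ring
    have h1θ0 : 0 ≤ 1 - θ := by
      rw [hθ1]
      exact div_nonneg (by linarith) (le_of_lt hba)
    have hcomb : θ • P + (1 - θ) • Q = x := by
      rw [hP, hQ, smul_add, smul_add, smul_smul, smul_smul]
      have h1 : θ • x + (1 - θ) • x = x := by
        rw [← add_smul]
        norm_num
      have hcoef : θ * a + (1 - θ) * b = 0 := by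
        rw [hθ1, hθ]
        field_simp
        ring
      calc θ • x + (θ * a) • v + ((1 - θ) • x + ((1 - θ) * b) • v)
          = (θ • x + (1 - θ) • x) + (θ * a + (1 - θ) * b) • v := by
            rw [add_smul]; abel
      _ = x := by rw [h1, hcoef, zero_smul, add_zero]
    rw [← hcomb]
    exact (convex_convexHull ℝ _) hPhull hQhull hθ0 h1θ0 (by ring)

/-- Minkowski's theorem. -/
lemma mem_convexHull_extremePoints {K : Set F} (hK : IsCompact K) (hKc : Convex ℝ K)
    {x : F} (hx : x ∈ K) : x ∈ convexHull ℝ (K.extremePoints ℝ) :=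
  minkowski_aux (Module.finrank ℝ F) K hK hKc x hx
    (Submodule.finrank_le _)

end Minkowski

/-! ### Every observable is a convex combination of extreme observables -/

section Decomposition

variable {V : Type*} [NormedAddCommGroup V] [NormedSpace ℝ V] [FiniteDimensional ℝ V]
  {S : Set V}

lemma affineOn_mul_const (c : ℝ) {f : S → ℝ} (hf : AffineOn S f) :
    AffineOn S (fun s => f s * c) := by
  intro s₁ s₂ p hp0 hp1 h
  simp only []
  rw [hf s₁ s₂ p hp0 hp1 h]; ring

lemma sum_subtype_extend {W : Type*} {t t' : Set W} (htt' : t ⊆ t')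
    [Fintype ↥t] [Fintype ↥t'] {M : Type*} [AddCommMonoid M] (f : ↥t' → M)
    (hf : ∀ j : ↥t', (↑j ∉ t) → f j = 0) :
    ∑ j : ↥t', f j = ∑ i : ↥t, f ⟨(i : W), htt' i.2⟩ := by
  classical
  have hinj : Function.Injective (fun i : ↥t => (⟨(i : W), htt' i.2⟩ : ↥t')) := by
    intro i j h
    have h2 := congrArg (Subtype.val : ↥t' → W) h
    exact Subtype.ext h2
  have h1 : ∑ i : ↥t, f ⟨(i : W), htt' i.2⟩
      = ∑ j ∈ Finset.univ.map ⟨_, hinj⟩, f j := by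
    rw [Finset.sum_map]; rfl
  rw [h1]
  refine (Finset.sum_subset (Finset.subset_univ _) ?_).symm
  intro j _ hj
  apply hf
  intro hmem
  apply hj
  have h3 : ((fun i : ↥t => (⟨(i : W), htt' i.2⟩ : ↥t')) ⟨(j : W), hmem⟩)
      ∈ Finset.univ.map ⟨_, hinj⟩ :=
    Finset.mem_map_of_mem _ (Finset.mem_univ _)
  have h4 : ((fun i : ↥t => (⟨(i : W), htt' i.2⟩ : ↥t')) ⟨(j : W), hmem⟩) = j :=
    Subtype.ext rfl
  rwa [h4] at h3

lemma exists_extreme_decomposition (hScomp : IsCompact S) (hSconv : Convex ℝ S)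
    (hSne : S.Nonempty) (A : Obs S) :
    ∃ (M : ℕ) (q : Fin M → ℝ) (Es : Fin M → Obs S) (hn : ∀ j, (Es j).n = A.n),
      (∀ j, ExtremeObs (Es j)) ∧ (∀ j, 0 ≤ q j) ∧ (∑ j, q j = 1) ∧
      (∀ y s, A.eff y s = ∑ j, q j * (Es j).eff (Fin.cast (hn j).symm y) s) := by
  classical
  -- an affine basis adapted to `S`
  obtain ⟨t, htS, htspan, htind⟩ := exists_affineIndependent ℝ V S
  obtain ⟨t', htt', ht'ind, ht'span⟩ := exists_subset_affineIndependent_affineSpan_eq_top htind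
  haveI : Finite ↥t' := finite_of_fin_dim_affineIndependent ℝ ht'ind
  haveI : Fintype ↥t' := Fintype.ofFinite _
  haveI : Finite ↥t := Set.Finite.to_subtype ((Set.toFinite t').subset htt')
  haveI : Fintype ↥t := Fintype.ofFinite _
  set b : AffineBasis ↥t' ℝ V := ⟨fun p => (p : V), ht'ind, by
    rw [Subtype.range_coe]; exact ht'span⟩ with hbdef
  have hb_apply : ∀ i : ↥t', b i = (i : V) := fun i => rfl
  -- t is nonempty
  obtain ⟨s₀, hs₀⟩ := hSne
  have htne : t.Nonempty := by
    by_contra hcon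
    rw [Set.not_nonempty_iff_eq_empty] at hcon
    have h1 : s₀ ∈ affineSpan ℝ S := subset_affineSpan ℝ S hs₀
    rw [← htspan, hcon, AffineSubspace.span_empty] at h1
    exact AffineSubspace.notMem_bot ℝ V s₀ h1
  -- the inclusion of t into t'
  set inc : ↥t → ↥t' := fun i => ⟨(i : V), htt' i.2⟩ with hinc
  have hinc_inj : Function.Injective inc := by
    intro i j h
    have h2 := congrArg (Subtype.val : ↥t' → V) h
    exact Subtype.ext h2
  -- barycentric coordinates restricted to S
  set lam : ↥t → S → ℝ := fun i s => b.coord (inc i) (s : V) with hlam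
  have hlam_affine : ∀ i, AffineOn S (lam i) := fun i =>
    affineOn_of_affineMap (b.coord (inc i))
  -- points of t, as elements of S
  set zt : ↥t → S := fun i => ⟨(i : V), htS i.2⟩ with hzt
  -- vanishing of exterior coordinates
  have hvanish : ∀ (j : ↥t'), ((j : V) ∉ t) → ∀ s' : S, b.coord j (s' : V) = 0 := by
    intro j hj s'
    have hs'span : (s' : V) ∈ affineSpan ℝ (Set.range ((↑) : ↥t → V)) := by
      rw [Subtype.range_coe]
      rw [htspan]
      exact subset_affineSpan ℝ S s'.2
    obtain ⟨fs, w, hw, hcomb⟩ := eq_affineCombination_of_mem_affineSpan hs'span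
    set w' : ↥t' → ℝ := fun j' => if h : (j' : V) ∈ t then w ⟨j', h⟩ else 0 with hw'
    have hw'inc : ∀ i : ↥t, w' (inc i) = w i := by
      intro i
      simp only [hw', hinc, Subtype.coe_eta, dif_pos i.2]
    have hcomb' : (s' : V) =
        (fs.map ⟨inc, hinc_inj⟩).affineCombination ℝ b w' := by
      rw [Finset.affineCombination_map, hcomb]
      congr 1
      · funext i; exact (hw'inc i).symm
    have hwsum : ∑ j' ∈ fs.map ⟨inc, hinc_inj⟩, w' j' = 1 := by
      rw [Finset.sum_map]
      simp only [Function.Embedding.coeFn_mk]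
      rw [Finset.sum_congr rfl fun i _ => hw'inc i]
      exact hw
    have hjnot : j ∉ fs.map ⟨inc, hinc_inj⟩ := by
      intro hjmem
      rw [Finset.mem_map] at hjmem
      obtain ⟨i, _, hij⟩ := hjmem
      apply hj
      rw [← hij]
      exact i.2
    rw [hcomb']
    exact AffineBasis.coord_apply_combination_of_notMem _ hjnot hwsum
  -- coordinates sum to one on S
  have hlamsum : ∀ s' : S, ∑ i : ↥t, lam i s' = 1 := by
    intro s'
    have h1 := b.sum_coord_apply_eq_one (s' : V)
    rw [sum_subtype_extend htt' (fun j => b.coord j (s' : V))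
      (fun j hj => hvanish j hj s')] at h1
    exact h1
  -- representation of points of S
  have hrep : ∀ s' : S, (s' : V) = ∑ i : ↥t, lam i s' • ((i : V)) := by
    intro s'
    have h2 := b.linear_combination_coord_eq_self (s' : V)
    rw [sum_subtype_extend htt' (fun j => b.coord j (s' : V) • b j)
      (fun j hj => by show b.coord j (s' : V) • b j = 0; rw [hvanish j hj s', zero_smul])] at h2
    exact h2.symm
  -- delta property
  have hdelta : ∀ i k : ↥t, lam i (zt k) = if i = k then 1 else 0 := by
    intro i k
    have h := b.coord_apply (inc i) (inc k)
    rw [hb_apply] at h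
    have : lam i (zt k) = b.coord (inc i) ((k : V)) := rfl
    rw [this, h]
    by_cases hik : i = k
    · rw [if_pos hik, if_pos (by rw [hik])]
    · rw [if_neg hik, if_neg (fun hc => hik (hinc_inj hc))]
  -- KEY: affine functions on S are determined by values on t
  have key : ∀ (f : S → ℝ), AffineOn S f → ∀ s' : S,
      f s' = ∑ i : ↥t, lam i s' * f (zt i) := by
    intro f hf s'
    haveI : Nonempty ↥t := htne.to_subtype
    set N : ℕ := Fintype.card ↥t with hN
    have hNpos : 0 < N := Fintype.card_pos
    have hNR : (0:ℝ) < (N:ℝ) := by exact_mod_cast hNpos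
    -- the centroid of t
    have hcw0 : ∀ i ∈ (Finset.univ : Finset ↥t), 0 ≤ ((N:ℝ)⁻¹) := fun i _ => by positivity
    have hcw1 : ∑ _i : ↥t, ((N:ℝ)⁻¹) = 1 := by
      rw [Finset.sum_const, Finset.card_univ, ← hN, nsmul_eq_mul]
      field_simp
    have hmS : ∑ i : ↥t, ((N:ℝ)⁻¹) • ((zt i : V)) ∈ S :=
      hSconv.sum_mem hcw0 hcw1 (fun i _ => (zt i).2)
    set m : S := ⟨_, hmS⟩ with hm
    have hfm : f m = ∑ i : ↥t, ((N:ℝ)⁻¹) * f (zt i) :=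
      hf.combo Finset.univ _ zt hSconv hcw0 hcw1 hmS
    -- choice of epsilon
    set Mb : ℝ := ∑ i : ↥t, |lam i s'| with hMb
    have hMb0 : 0 ≤ Mb := Finset.sum_nonneg fun i _ => abs_nonneg _
    have hlam_lb : ∀ i : ↥t, -Mb ≤ lam i s' := by
      intro i
      have h1 : |lam i s'| ≤ Mb :=
        Finset.single_le_sum (fun j (_ : j ∈ Finset.univ) => abs_nonneg (lam j s'))
          (Finset.mem_univ i)
      have h2 := neg_abs_le (lam i s')
      linarith
    set ε : ℝ := (1 + (N:ℝ) * (Mb + 1))⁻¹ with hε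
    have hden : (0:ℝ) < 1 + (N:ℝ) * (Mb + 1) := by nlinarith
    have hε0 : 0 < ε := inv_pos.2 hden
    have hε1 : ε < 1 := by
      rw [hε]
      rw [inv_lt_one_iff₀]
      right
      nlinarith
    have hεNM : ε * ((N:ℝ) * (Mb + 1)) = 1 - ε := by
      rw [hε]
      field_simp
      ring
    -- the mixed weights
    set μ : ↥t → ℝ := fun i => ε * lam i s' + (1 - ε) * (N:ℝ)⁻¹ with hμ
    have hμ0 : ∀ i ∈ (Finset.univ : Finset ↥t), 0 ≤ μ i := by
      intro i _
      have h1 : (1 - ε) * (N:ℝ)⁻¹ = ε * (Mb + 1) := by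
        rw [← hεNM]
        field_simp
      have h2 : μ i = ε * (lam i s' + Mb + 1) := by rw [hμ]; simp only []; rw [h1]; ring
      rw [h2]
      have := hlam_lb i
      nlinarith
    have hμ1 : ∑ i : ↥t, μ i = 1 := by
      rw [hμ]
      simp only []
      rw [Finset.sum_add_distrib, ← Finset.mul_sum, hlamsum s', ← Finset.mul_sum, hcw1]
      ring
    have hqS : ∑ i : ↥t, μ i • ((zt i : V)) ∈ S :=
      hSconv.sum_mem hμ0 hμ1 (fun i _ => (zt i).2)
    -- the combination two ways
    have hq_eq : ∑ i : ↥t, μ i • ((zt i : V)) = ε • (s' : V) + (1 - ε) • ((m : S) : V) := by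
      have hmv : ((m : S) : V) = ∑ i : ↥t, ((N:ℝ)⁻¹) • ((zt i : V)) := rfl
      rw [hmv, hrep s', Finset.smul_sum, Finset.smul_sum, ← Finset.sum_add_distrib]
      refine Finset.sum_congr rfl fun i _ => ?_
      rw [smul_smul, smul_smul, ← add_smul]
    have hmem2 : ε • (s' : V) + (1 - ε) • ((m : S) : V) ∈ S := hq_eq ▸ hqS
    have hfq1 : f ⟨_, hqS⟩ = ∑ i : ↥t, μ i * f (zt i) :=
      hf.combo Finset.univ μ zt hSconv hμ0 hμ1 hqS
    have hfq2 : f ⟨_, hqS⟩ = ε * f s' + (1 - ε) * f m := by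
      have hsub : (⟨_, hqS⟩ : S) = ⟨ε • (s' : V) + (1 - ε) • ((m : S) : V), hmem2⟩ :=
        Subtype.ext hq_eq
      rw [hsub]
      exact hf s' m ε (le_of_lt hε0) (le_of_lt hε1) hmem2
    -- combine
    have hcomb : ε * f s' + (1 - ε) * f m
        = ε * (∑ i : ↥t, lam i s' * f (zt i)) + (1 - ε) * f m := by
      rw [← hfq2, hfq1, hfm]
      rw [Finset.mul_sum, Finset.mul_sum, ← Finset.sum_add_distrib]
      refine Finset.sum_congr rfl fun i _ => ?_
      rw [hμ]
      ring
    have := mul_left_cancel₀ (ne_of_gt hε0) (by linarith : ε * f s' = ε * ∑ i : ↥t, lam i s' * f (zt i))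
    exact this
  -- the Euclidean model space
  set Φ : (Fin A.n → S → ℝ) → (EuclideanSpace ℝ (Fin A.n × ↥t)) := fun f => WithLp.toLp 2 (fun q : Fin A.n × ↥t => f q.1 (zt q.2)) with hΦ
  set Rm : (EuclideanSpace ℝ (Fin A.n × ↥t)) → Fin A.n → S → ℝ := fun v x s => ∑ i : ↥t, lam i s * v (x, i) with hRm
  have hRaff : ∀ (v : (EuclideanSpace ℝ (Fin A.n × ↥t))) x, AffineOn S (Rm v x) := fun v x =>
    affineOn_sum _ _ fun i _ => affineOn_mul_const _ (hlam_affine i)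
  have hRΦf : ∀ (f : Fin A.n → S → ℝ), (∀ x, AffineOn S (f x)) →
      ∀ x s', Rm (Φ f) x s' = f x s' :=
    fun f hfa x s' => (key (f x) (hfa x) s').symm
  have hΦR : ∀ (v : (EuclideanSpace ℝ (Fin A.n × ↥t))) (x : Fin A.n) (i : ↥t), Rm v x (zt i) = v (x, i) := by
    intro v x i
    show (∑ j : ↥t, lam j (zt i) * v (x, j)) = v (x, i)
    rw [Finset.sum_eq_single i (fun j _ hj => by rw [hdelta j i, if_neg hj, zero_mul])
      (fun h => absurd (Finset.mem_univ i) h)]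
    rw [hdelta i i, if_pos rfl, one_mul]
  have hRadd : ∀ (v w : (EuclideanSpace ℝ (Fin A.n × ↥t))) x s', Rm (v + w) x s' = Rm v x s' + Rm w x s' := by
    intro v w x s'
    show (∑ i : ↥t, lam i s' * (v + w) (x, i)) = _
    simp only [PiLp.add_apply]
    rw [← Finset.sum_add_distrib]
    exact Finset.sum_congr rfl fun i _ => by ring
  have hRsmul : ∀ (c : ℝ) (v : (EuclideanSpace ℝ (Fin A.n × ↥t))) x s', Rm (c • v) x s' = c * Rm v x s' := by
    intro c v x s'
    show (∑ i : ↥t, lam i s' * (c • v) (x, i)) = _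
    simp only [PiLp.smul_apply, smul_eq_mul]
    rw [Finset.mul_sum]
    exact Finset.sum_congr rfl fun i _ => by ring
  have hRzero : ∀ x s', Rm (0 : (EuclideanSpace ℝ (Fin A.n × ↥t))) x s' = 0 := by
    intro x s'
    show (∑ i : ↥t, lam i s' * (0 : (EuclideanSpace ℝ (Fin A.n × ↥t))) (x, i)) = 0
    simp only [PiLp.zero_apply, mul_zero, Finset.sum_const_zero]
  have hRsum : ∀ {ι₂ : Type} (u : Finset ι₂) (c : ι₂ → ℝ) (vs : ι₂ → (EuclideanSpace ℝ (Fin A.n × ↥t))) (x : Fin A.n)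
      (s' : S), Rm (∑ j ∈ u, c j • vs j) x s' = ∑ j ∈ u, c j * Rm (vs j) x s' := by
    intro ι₂ u c vs x s'
    classical
    induction u using Finset.induction_on with
    | empty => simp only [Finset.sum_empty]; exact hRzero x s'
    | @insert a u ha ih =>
      rw [Finset.sum_insert ha, Finset.sum_insert ha, hRadd, hRsmul, ih]
  -- the compact convex set of observable coordinates
  set K' : Set (EuclideanSpace ℝ (Fin A.n × ↥t)) := {v | (∀ x s', 0 ≤ Rm v x s') ∧ (∀ s', ∑ x, Rm v x s' = 1)} with hK'
  have hK'conv : Convex ℝ K' := by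
    intro v hv w hw a c ha hc hac
    constructor
    · intro x s'
      rw [hRadd, hRsmul, hRsmul]
      exact add_nonneg (mul_nonneg ha (hv.1 x s')) (mul_nonneg hc (hw.1 x s'))
    · intro s'
      rw [Finset.sum_congr rfl fun x (_ : x ∈ Finset.univ) => by
        rw [hRadd, hRsmul, hRsmul]]
      rw [Finset.sum_add_distrib, ← Finset.mul_sum, ← Finset.mul_sum, hv.2 s', hw.2 s']
      simpa using hac
  have hK'bound : ∀ v ∈ K', ∀ q' : Fin A.n × ↥t, v q' ∈ Set.Icc (0:ℝ) 1 := by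
    intro v hv q'
    have h0 : Rm v q'.1 (zt q'.2) = v q' := hΦR v q'.1 q'.2
    constructor
    · rw [← h0]; exact hv.1 q'.1 (zt q'.2)
    · rw [← h0]
      calc Rm v q'.1 (zt q'.2) ≤ ∑ x, Rm v x (zt q'.2) :=
            Finset.single_le_sum (fun x _ => hv.1 x (zt q'.2)) (Finset.mem_univ q'.1)
      _ = 1 := hv.2 (zt q'.2)
  have hRcont : ∀ (x : Fin A.n) (s' : S), Continuous fun v : (EuclideanSpace ℝ (Fin A.n × ↥t)) => Rm v x s' := by
    intro x s'
    apply continuous_finset_sum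
    intro i _
    exact continuous_const.mul (EuclideanSpace.proj ((x, i) : Fin A.n × ↥t)).continuous
  have hK'closed : IsClosed K' := by
    have hdec : K' = (⋂ (x : Fin A.n) (s' : S), {v : (EuclideanSpace ℝ (Fin A.n × ↥t)) | 0 ≤ Rm v x s'}) ∩
        ⋂ (s' : S), {v : (EuclideanSpace ℝ (Fin A.n × ↥t)) | ∑ x, Rm v x s' = 1} := by
      ext v
      constructor
      · intro hv
        exact ⟨Set.mem_iInter.2 fun x => Set.mem_iInter.2 fun s' => hv.1 x s',
          Set.mem_iInter.2 fun s' => hv.2 s'⟩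
      · intro hv
        exact ⟨fun x s' => Set.mem_iInter.1 (Set.mem_iInter.1 hv.1 x) s',
          fun s' => Set.mem_iInter.1 hv.2 s'⟩
    rw [hdec]
    refine IsClosed.inter (isClosed_iInter fun x => isClosed_iInter fun s' =>
      isClosed_le continuous_const (hRcont x s')) (isClosed_iInter fun s' => ?_)
    exact isClosed_eq (continuous_finset_sum _ fun x _ => hRcont x s') continuous_const
  have hK'cpt : IsCompact K' := by
    have himg : IsCompact ((EuclideanSpace.equiv (Fin A.n × ↥t) ℝ).symm ''
        (Set.univ.pi fun _ : Fin A.n × ↥t => Set.Icc (0:ℝ) 1)) :=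
      (isCompact_univ_pi fun _ => isCompact_Icc).image
        (EuclideanSpace.equiv (Fin A.n × ↥t) ℝ).symm.continuous
    refine himg.of_isClosed_subset hK'closed ?_
    intro v hv
    refine ⟨EuclideanSpace.equiv (Fin A.n × ↥t) ℝ v, ?_, ?_⟩
    · intro q' _
      exact hK'bound v hv q'
    · exact (EuclideanSpace.equiv (Fin A.n × ↥t) ℝ).symm_apply_apply v
  -- A's coordinates lie in K'
  have hΦA : Φ A.eff ∈ K' := by
    constructor
    · intro x s'
      rw [hRΦf A.eff A.affine x s']
      exact A.nonneg x s'
    · intro s'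
      rw [Finset.sum_congr rfl fun x (_ : x ∈ Finset.univ) => hRΦf A.eff A.affine x s']
      exact A.normalized s'
  have hhull := mem_convexHull_extremePoints hK'cpt hK'conv hΦA
  rw [convexHull_eq] at hhull
  obtain ⟨ι₂, u, w, z, hw0, hw1, hzext, hcm⟩ := hhull
  rw [Finset.centerMass_eq_of_sum_1 _ _ hw1] at hcm
  -- reindex by Fin
  set M := u.card with hM
  set eqv : ↥u ≃ Fin M := u.equivFin with heqv
  set q : Fin M → ℝ := fun j => w ((eqv.symm j) : ι₂) with hq
  set vs : Fin M → (EuclideanSpace ℝ (Fin A.n × ↥t)) := fun j => z ((eqv.symm j) : ι₂) with hvs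
  have hq0 : ∀ j, 0 ≤ q j := fun j => hw0 _ (eqv.symm j).2
  have hq1 : ∑ j, q j = 1 := by
    rw [hq]
    rw [Equiv.sum_comp eqv.symm (fun i : ↥u => w (i : ι₂))]
    rw [Finset.sum_coe_sort u w]
    exact hw1
  have hvsext : ∀ j, vs j ∈ (K'.extremePoints ℝ) := fun j => hzext _ (eqv.symm j).2
  have hvsK : ∀ j, vs j ∈ K' := fun j => extremePoints_subset (hvsext j)
  -- the extreme observables
  set Es : Fin M → Obs S := fun j =>
    ⟨A.n, fun x s => Rm (vs j) x s, fun x => hRaff _ x, (hvsK j).1, (hvsK j).2⟩ with hEs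
  have hn : ∀ j, (Es j).n = A.n := fun j => rfl
  have hΦE : ∀ j, Φ (fun x s => Rm (vs j) x s) = vs j := by
    intro j
    ext q'
    exact hΦR (vs j) q'.1 q'.2
  have hEsext : ∀ j, ExtremeObs (Es j) := by
    intro j
    intro Bf Cf hBaff hB0 hBn hCaff hC0 hCn lam' hl0 hl1 hdec
    have hΦB : Φ Bf ∈ K' := by
      constructor
      · intro x s'; rw [hRΦf Bf hBaff x s']; exact hB0 x s'
      · intro s'
        rw [Finset.sum_congr rfl fun x (_ : x ∈ Finset.univ) => hRΦf Bf hBaff x s']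
        exact hBn s'
    have hΦC : Φ Cf ∈ K' := by
      constructor
      · intro x s'; rw [hRΦf Cf hCaff x s']; exact hC0 x s'
      · intro s'
        rw [Finset.sum_congr rfl fun x (_ : x ∈ Finset.univ) => hRΦf Cf hCaff x s']
        exact hCn s'
    have hseg : vs j ∈ openSegment ℝ (Φ Bf) (Φ Cf) := by
      refine ⟨lam', 1 - lam', hl0, by linarith, by ring, ?_⟩
      rw [← hΦE j]
      ext q'
      have h1 := congrFun (hdec q'.1) (zt q'.2)
      simp only [Pi.add_apply, Pi.smul_apply, smul_eq_mul] at h1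
      show (lam' • Φ Bf + (1 - lam') • Φ Cf) q' = _
      rw [PiLp.add_apply, PiLp.smul_apply, PiLp.smul_apply]
      simp only [smul_eq_mul]
      exact h1.symm
    have hext := (mem_extremePoints.1 (hvsext j)).2 (Φ Bf) hΦB (Φ Cf) hΦC hseg
    constructor
    · funext x s'
      calc Bf x s' = Rm (Φ Bf) x s' := (hRΦf Bf hBaff x s').symm
      _ = Rm (vs j) x s' := by rw [hext.1]
      _ = (Es j).eff x s' := rfl
    · funext x s'
      calc Cf x s' = Rm (Φ Cf) x s' := (hRΦf Cf hCaff x s').symm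
      _ = Rm (vs j) x s' := by rw [hext.2]
      _ = (Es j).eff x s' := rfl
  refine ⟨M, q, Es, hn, hEsext, hq0, hq1, ?_⟩
  intro y s
  have h1 : A.eff y s = Rm (Φ A.eff) y s := (hRΦf A.eff A.affine y s).symm
  rw [h1, ← hcm, hRsum u w z y s]
  rw [← Finset.sum_coe_sort u (fun i => w i * Rm (z i) y s)]
  rw [← Equiv.sum_comp eqv.symm (fun i : ↥u => w (i : ι₂) * Rm (z (i : ι₂)) y s)]
  exact Finset.sum_congr rfl fun j _ => rfl

end Decomposition

/-- an observable is simulation irreducible if and only if it is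
postprocessing clean and postprocessing equivalent to an extreme observable. -/
theorem statement8 {V : Type*} [NormedAddCommGroup V] [NormedSpace ℝ V]
    [FiniteDimensional ℝ V] {S : Set V}
    (hScomp : IsCompact S) (hSconv : Convex ℝ S) (hSne : S.Nonempty)
    (A : Obs S) :
    SimIrreducible A ↔ PPClean A ∧ ∃ E : Obs S, ExtremeObs E ∧ PPEquiv A E := by
  constructor
  · intro hirr
    refine ⟨hirr.ppClean, ?_⟩
    obtain ⟨M, q, Es, hn, hEsext, hq0, hq1, heq⟩ :=
      exists_extreme_decomposition hScomp hSconv hSne A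
    have hsim : Simulable {E : Obs S | ExtremeObs E} A := by
      classical
      refine ⟨M, A.n, Es, hn, q, fun j x y => if x = y then 1 else 0, hEsext, hq0, hq1,
        fun j x y => by positivity, fun j x => by simp, ?_⟩
      intro y s
      rw [heq y s]
      refine Finset.sum_congr rfl fun j _ => ?_
      rw [Finset.sum_eq_single y (fun x _ hx => by
          show q j * (if x = y then (1:ℝ) else 0) * (Es j).eff (Fin.cast (hn j).symm x) s = 0
          rw [if_neg hx]; ring)
        (fun h => absurd (Finset.mem_univ y) h)]
      show q j * (Es j).eff (Fin.cast (hn j).symm y) s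
        = q j * (if y = y then (1:ℝ) else 0) * (Es j).eff (Fin.cast (hn j).symm y) s
      rw [if_pos rfl, mul_one]
    obtain ⟨E, hEmem, hequiv⟩ := hirr _ hsim
    exact ⟨E, hEmem, hequiv⟩
  · rintro ⟨hclean, E, hEext, hAE⟩
    exact simIrreducible_of_clean_of_extreme hclean E hEext hAE
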